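/- Let l ≥ 2 be an integer and let H be a subgraph of a graph G ∈ 𝒢_l such that H is an odd K4-subdivision. Then: (1) each pair of vertex-disjoint arrises of H have the same length, and all arrises have length at most l; (2) H is an induced subgraph of G; (3) if moreover l ≥ 3, then no vertex of V(G) \ V(H) has two or more neighbours in H. -/

import Mathlib

open SimpleGraph

variable {V : Type*}

/-- The set of internal vertices of a walk from `x` to `y`. -/
def wInterior {G : SimpleGraph V} {x y : V} (P : G.Walk x y) : Set V :=
  {a | a ∈ P.support ∧ a ≠ x ∧ a ≠ y}

/-- `P` is an induced path of `G`. -/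
def IsInducedPath (G : SimpleGraph V) {x y : V} (P : G.Walk x y) : Prop :=
  P.IsPath ∧ ∀ a ∈ P.support, ∀ b ∈ P.support, G.Adj a b → s(a, b) ∈ P.edges

/-- A hole of `G`: an induced cycle of length at least 4. -/
def IsHole (G : SimpleGraph V) {v : V} (w : G.Walk v v) : Prop :=
  w.IsCycle ∧ 4 ≤ w.length ∧
    ∀ a ∈ w.support, ∀ b ∈ w.support, G.Adj a b → s(a, b) ∈ w.edges

/-- An odd hole of `G`. -/
def IsOddHole (G : SimpleGraph V) {v : V} (w : G.Walk v v) : Prop :=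
  IsHole G w ∧ Odd w.length

/-- `G` belongs to the family `𝒢ₗ`: it has girth `2l+1` and
no odd hole of length at least `2l+3`. -/
def MemGFam (G : SimpleGraph V) (l : ℕ) : Prop :=
  G.girth = (2 * l + 1 : ℕ) ∧
    ∀ (v : V) (w : G.Walk v v), IsOddHole G w → w.length < 2 * l + 3

/-- `G` is `k`-vertex-critical. -/
def IsVertexCritical (G : SimpleGraph V) (k : ℕ) : Prop :=
  G.chromaticNumber = k ∧
    ∀ v : V, (G.induce {u | u ≠ v}).chromaticNumber < k

/-- `S` is a vertex cut of `G`: deleting `S` leaves a disconnected graph. -/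
def IsVertexCut (G : SimpleGraph V) (S : Set V) : Prop :=
  ¬ (G.induce Sᶜ).Preconnected

/-- `G` has a `K2`-cut. -/
def HasK2Cut (G : SimpleGraph V) : Prop :=
  ∃ u v : V, G.Adj u v ∧ IsVertexCut G {u, v}

/-- `G` has a `P3`-cut. -/
def HasP3Cut (G : SimpleGraph V) : Prop :=
  ∃ u v w : V, u ≠ w ∧ G.Adj u v ∧ G.Adj v w ∧ ¬ G.Adj u w ∧ IsVertexCut G {u, v, w}

/-- `G` has a 2-edge-cut: two edges whose removal disconnects the graph. -/
def Has2EdgeCut (G : SimpleGraph V) : Prop :=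
  ∃ e f : Sym2 V, e ≠ f ∧ e ∈ G.edgeSet ∧ f ∈ G.edgeSet ∧
    ¬ (G.deleteEdges {e, f}).Preconnected

/-- `Q1`, `Q2` are the two internally disjoint `(x,y)`-paths of the cycle `w`. -/
def ArcsOf (G : SimpleGraph V) {v x y : V} (w : G.Walk v v) (Q1 Q2 : G.Walk x y) : Prop :=
  x ∈ w.support ∧ y ∈ w.support ∧ x ≠ y ∧ Q1.IsPath ∧ Q2.IsPath ∧
    ({a | a ∈ Q1.support} ∩ {a | a ∈ Q2.support} = {x, y}) ∧
    ({e | e ∈ w.edges} = {e | e ∈ Q1.edges} ∪ {e | e ∈ Q2.edges})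

/-- `P` is a chordal path of the hole `w`: `w ∪ P` is an induced theta-subgraph of `G`. -/
def IsChordalPath (G : SimpleGraph V) {v x y : V} (w : G.Walk v v) (P : G.Walk x y) : Prop :=
  IsHole G w ∧ P.IsPath ∧ 2 ≤ P.length ∧ x ∈ w.support ∧ y ∈ w.support ∧ x ≠ y ∧
    (∀ a ∈ wInterior P, a ∉ w.support) ∧
    (∀ a, (a ∈ w.support ∨ a ∈ P.support) → ∀ b, (b ∈ w.support ∨ b ∈ P.support) →
      G.Adj a b → (s(a, b) ∈ w.edges ∨ s(a, b) ∈ P.edges))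

/-- `P` is an `(s,t)`-jump over the hole `w`. -/
def IsJump (G : SimpleGraph V) {v s t : V} (w : G.Walk v v) (P : G.Walk s t) : Prop :=
  IsHole G w ∧ s ∈ w.support ∧ t ∈ w.support ∧ s ≠ t ∧ ¬ G.Adj s t ∧
    IsInducedPath G P ∧ ∀ a ∈ wInterior P, a ∉ w.support

/-- `P` is a local jump over `w` across the interior of the arc `Q1`
(`Q1`, `Q2` being the two arcs of `w` between the ends of `P`). -/
def IsLocalJumpAcross (G : SimpleGraph V) {v s t : V} (w : G.Walk v v)
    (P Q1 Q2 : G.Walk s t) : Prop :=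
  IsJump G w P ∧ ArcsOf G w Q1 Q2 ∧
    (∃ a ∈ wInterior Q1, ∃ b ∈ wInterior P, G.Adj a b) ∧
    (∀ a ∈ wInterior Q2, ∀ b ∈ wInterior P, ¬ G.Adj a b)

/-- `P` is a local jump over `w`. -/
def IsLocalJump (G : SimpleGraph V) {v s t : V} (w : G.Walk v v) (P : G.Walk s t) : Prop :=
  ∃ Q1 Q2 : G.Walk s t, IsLocalJumpAcross G w P Q1 Q2

/-- `P` is a local jump over `w` across one vertex. -/
def IsLocalJumpAcrossOne (G : SimpleGraph V) {v s t : V} (w : G.Walk v v)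
    (P : G.Walk s t) : Prop :=
  ∃ Q1 Q2 : G.Walk s t, IsLocalJumpAcross G w P Q1 Q2 ∧ Q1.length = 2

/-- `P` is a short jump over `w`: no internal vertex of either arc of `w`
has a neighbour among the internal vertices of `P`. -/
def IsShortJump (G : SimpleGraph V) {v s t : V} (w : G.Walk v v) (P : G.Walk s t) : Prop :=
  IsJump G w P ∧
    ∀ a ∈ w.support, a ≠ s → a ≠ t → ∀ b ∈ wInterior P, ¬ G.Adj a b

/-- `P` is a short jump over `w` across the interior of `Q1`, i.e. `P ∪ Q1` is an
odd hole (a jump hole over `w`). -/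
def IsShortJumpAcross (G : SimpleGraph V) {v s t : V} (w : G.Walk v v)
    (P Q1 Q2 : G.Walk s t) : Prop :=
  IsShortJump G w P ∧ ArcsOf G w Q1 Q2 ∧ IsOddHole G (P.append Q1.reverse)

/-- `x` lies in some jump hole over `w`. -/
def InJumpHoleOver (G : SimpleGraph V) {v : V} (w : G.Walk v v) (x : V) : Prop :=
  ∃ (s t : V) (P Q1 Q2 : G.Walk s t),
    IsShortJumpAcross G w P Q1 Q2 ∧ (x ∈ P.support ∨ x ∈ Q1.support)

/-- `a`, `b`, `c`, `d` appear on the cycle `w` in this cyclic order. -/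
def CyclicOrder4 (G : SimpleGraph V) {v : V} (w : G.Walk v v) (a b c d : V) : Prop :=
  ∃ n : ℕ, List.Sublist [a, b, c, d] (w.support.tail.rotate n)

/-- A `K4`-subdivision in `G`: four distinct branch vertices joined by six
internally disjoint paths (the arrises). -/
structure K4Sub (G : SimpleGraph V) where
  u1 : V
  u2 : V
  u3 : V
  u4 : V
  P1 : G.Walk u1 u2
  P2 : G.Walk u3 u4
  Q1 : G.Walk u2 u3
  Q2 : G.Walk u1 u4
  L1 : G.Walk u1 u3
  L2 : G.Walk u2 u4
  hu : List.Nodup [u1, u2, u3, u4]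
  hP1 : P1.IsPath
  hP2 : P2.IsPath
  hQ1 : Q1.IsPath
  hQ2 : Q2.IsPath
  hL1 : L1.IsPath
  hL2 : L2.IsPath
  hP : ∀ a ∈ P1.support, a ∉ P2.support
  hQ : ∀ a ∈ Q1.support, a ∉ Q2.support
  hL : ∀ a ∈ L1.support, a ∉ L2.support

namespace K4Sub

variable {G : SimpleGraph V}

/-- The face cycle `C1 = P1 ∪ Q1 ∪ L1`. -/
def C1 (H : K4Sub G) : G.Walk H.u1 H.u1 := (H.P1.append H.Q1).append H.L1.reverse
/-- The face cycle `C2 = P1 ∪ Q2 ∪ L2`. -/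
def C2 (H : K4Sub G) : G.Walk H.u1 H.u1 := (H.P1.append H.L2).append H.Q2.reverse
/-- The face cycle `C3 = P2 ∪ Q1 ∪ L2`. -/
def C3 (H : K4Sub G) : G.Walk H.u2 H.u2 := (H.Q1.append H.P2).append H.L2.reverse
/-- The face cycle `C4 = C1 △ C2 △ C3 = P2 ∪ Q2 ∪ L1`. -/
def C4 (H : K4Sub G) : G.Walk H.u1 H.u1 := (H.L1.append H.P2).append H.Q2.reverse

/-- The vertex set of the subdivision. -/
def verts (H : K4Sub G) : Set V :=
  {a | a ∈ H.P1.support ∨ a ∈ H.P2.support ∨ a ∈ H.Q1.support ∨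
       a ∈ H.Q2.support ∨ a ∈ H.L1.support ∨ a ∈ H.L2.support}

/-- The edge set of the subdivision. -/
def edges (H : K4Sub G) : Set (Sym2 V) :=
  {e | e ∈ H.P1.edges ∨ e ∈ H.P2.edges ∨ e ∈ H.Q1.edges ∨
       e ∈ H.Q2.edges ∨ e ∈ H.L1.edges ∨ e ∈ H.L2.edges}

end K4Sub

/-- `H` is an odd `K4`-subdivision: all four face cycles are odd holes. -/
def IsOddK4 (G : SimpleGraph V) (H : K4Sub G) : Prop :=
  IsOddHole G H.C1 ∧ IsOddHole G H.C2 ∧ IsOddHole G H.C3 ∧ IsOddHole G H.C4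

/-- `G` has an odd `K4`-subdivision. -/
def HasOddK4 (G : SimpleGraph V) : Prop := ∃ H : K4Sub G, IsOddK4 G H

/-- `H` is a balanced `K4`-subdivision of type `(1,2)`. -/
def IsBalancedK4 (G : SimpleGraph V) (H : K4Sub G) : Prop :=
  IsOddHole G H.C1 ∧ IsOddHole G H.C2 ∧
    IsHole G H.C3 ∧ Even H.C3.length ∧ IsHole G H.C4 ∧ Even H.C4.length ∧
    H.Q1.length = 1 ∧ 2 ≤ H.L2.length

/-- `G` contains a balanced `K4`-subdivision of type `(1,2)`. -/
def HasBalancedK4 (G : SimpleGraph V) : Prop := ∃ H : K4Sub G, IsBalancedK4 G H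

/-- `P` is a direct connection linking the (vertex sets of) two disjoint induced
subgraphs `S1` and `S2`. -/
def IsDirectConnection (G : SimpleGraph V) (S1 S2 : Set V) {v1 v2 : V}
    (P : G.Walk v1 v2) : Prop :=
  IsInducedPath G P ∧ (∀ x ∈ P.support, x ∉ S1 ∧ x ∉ S2) ∧
    (∃ y ∈ S1, G.Adj v1 y) ∧ (∃ y ∈ S2, G.Adj v2 y) ∧
    (∀ x ∈ P.support, (∃ y ∈ S1, G.Adj x y) → x = v1) ∧
    (∀ x ∈ P.support, (∃ y ∈ S2, G.Adj x y) → x = v2)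

/-- `P` is a minimal direct connection linking `S1` and `S2`. -/
def IsMinimalDirectConnection (G : SimpleGraph V) (S1 S2 : Set V) {v1 v2 : V}
    (P : G.Walk v1 v2) : Prop :=
  IsDirectConnection G S1 S2 P ∧
    ∀ (w1 w2 : V) (P' : G.Walk w1 w2), IsDirectConnection G S1 S2 P' →
      (∀ x ∈ P'.support, x ∈ P.support) → ∀ x ∈ P.support, x ∈ P'.support


section AuxLemmas
open SimpleGraph.Walk
variable {G : SimpleGraph V}


/-- A path from a vertex to itself has length 0. -/
lemma myPathLoop {v : V} {p : G.Walk v v} (hp : p.IsPath) : p.length = 0 := by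
  cases p with
  | nil => rfl
  | cons h q =>
    rw [cons_isPath_iff] at hp
    exact absurd q.end_mem_support hp.2

/-- If a path from u to v contains the edge s(u,v), it has length 1. -/
lemma myEdgeEnds {u v : V} {p : G.Walk u v} (hp : p.IsPath) (he : s(u, v) ∈ p.edges) :
    p.length = 1 := by
  induction p with
  | nil => simp at he
  | @cons u b v h q ih =>
    rw [cons_isPath_iff] at hp
    rw [edges_cons, List.mem_cons] at he
    rcases he with he | he
    · rw [Sym2.eq_iff] at he
      rcases he with ⟨-, rfl⟩ | ⟨rfl, rfl⟩
      · rw [length_cons, myPathLoop hp.1]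
      · exact absurd rfl h.ne
    · exact absurd (q.fst_mem_support_of_mem_edges he) hp.2

/-- Appending paths meeting only at the common endpoint yields a path. -/
lemma myPathAppend {u v w : V} {p : G.Walk u v} {q : G.Walk v w}
    (hp : p.IsPath) (hq : q.IsPath)
    (hmeet : ∀ a, a ∈ p.support → a ∈ q.support → a = v) :
    (p.append q).IsPath := by
  have hqn := hq.support_nodup
  rw [support_eq_cons, List.nodup_cons] at hqn
  rw [isPath_def, support_append]
  refine List.Nodup.append hp.support_nodup hqn.2 ?_
  intro a hap haq
  have : a ∈ q.support := by rw [support_eq_cons]; exact List.mem_cons_of_mem _ haq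
  exact absurd (hmeet a hap this ▸ haq) hqn.1

/-- Gluing two paths between distinct `u`, `v` meeting only at `u` and `v`
gives a cycle, provided the total length is at least 3. -/
lemma myCycleAppend {u v : V} {p : G.Walk u v} {q : G.Walk v u}
    (hne : u ≠ v) (hp : p.IsPath) (hq : q.IsPath)
    (hmeet : ∀ a, a ∈ p.support → a ∈ q.support → a = u ∨ a = v)
    (hlen : 3 ≤ p.length + q.length) :
    (p.append q).IsCycle := by
  have hpn := hp.support_nodup
  have hqn := hq.support_nodup
  have hpn' := hpn; rw [support_eq_cons, List.nodup_cons] at hpn'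
  have hqn' := hqn; rw [support_eq_cons, List.nodup_cons] at hqn'
  rw [isCycle_def]
  refine ⟨⟨?_⟩, ?_, ?_⟩
  · -- edges nodup
    rw [edges_append]
    refine List.Nodup.append hp.isTrail.edges_nodup hq.isTrail.edges_nodup ?_
    intro e hep heq
    induction e with
    | h a b =>
      have hap : a ∈ p.support := p.fst_mem_support_of_mem_edges hep
      have hbp : b ∈ p.support := p.snd_mem_support_of_mem_edges hep
      have haq : a ∈ q.support := q.fst_mem_support_of_mem_edges heq
      have hbq : b ∈ q.support := q.snd_mem_support_of_mem_edges heq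
      have hab : a ≠ b := (G.ne_of_adj (p.edges_subset_edgeSet hep))
      rcases hmeet a hap haq with rfl | rfl <;> rcases hmeet b hbp hbq with rfl | rfl
      · exact hab rfl
      · have h1 : p.length = 1 := myEdgeEnds hp hep
        have h2 : q.length = 1 := myEdgeEnds hq (by rwa [Sym2.eq_swap] at heq)
        omega
      · have h1 : p.length = 1 := myEdgeEnds hp (by rwa [Sym2.eq_swap] at hep)
        have h2 : q.length = 1 := myEdgeEnds hq heq
        omega
      · exact hab rfl
  · -- not nil
    intro h
    have : (p.append q).length = 0 := by rw [h]; rfl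
    rw [length_append] at this; omega
  · -- support tail nodup
    rw [tail_support_append]
    refine List.Nodup.append ?_ ?_ ?_
    · rw [support_eq_cons] at hpn; exact (List.nodup_cons.mp hpn).2
    · rw [support_eq_cons] at hqn; exact (List.nodup_cons.mp hqn).2
    · intro a hap haq
      have hap' : a ∈ p.support := by
        rw [support_eq_cons]; exact List.mem_cons_of_mem _ hap
      have haq' : a ∈ q.support := by
        rw [support_eq_cons]; exact List.mem_cons_of_mem _ haq
      rcases hmeet a hap' haq' with rfl | rfl
      · exact hpn'.1 hap
      · exact hqn'.1 haq

/-- Splitting a cycle at a non-base vertex gives two paths. -/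
lemma myCycleSplit [DecidableEq V] {v z : V} {w : G.Walk v v} (hw : w.IsCycle)
    (hz : z ∈ w.support) (hne : z ≠ v) :
    (w.takeUntil z hz).IsPath ∧ (w.dropUntil z hz).IsPath := by
  set t := w.takeUntil z hz with ht
  set d := w.dropUntil z hz with hd
  have hspec : t.append d = w := w.take_spec hz
  have htail : w.support.tail = t.support.tail ++ d.support.tail := by
    conv_lhs => rw [← hspec]
    exact tail_support_append t d
  have hnodup : w.support.tail.Nodup := ((isCycle_def w).mp hw).2.2
  rw [htail, List.nodup_append] at hnodup
  obtain ⟨h1, h2, h3⟩ := hnodup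
  constructor
  · rw [isPath_def, support_eq_cons, List.nodup_cons]
    refine ⟨?_, h1⟩
    intro hv
    have hvd : v ∈ d.support := d.end_mem_support
    rw [support_eq_cons, List.mem_cons] at hvd
    rcases hvd with h | h
    · exact hne h.symm
    · exact h3 _ hv _ h rfl
  · rw [isPath_def, support_eq_cons, List.nodup_cons]
    refine ⟨?_, h2⟩
    intro hzd
    have hzt : z ∈ t.support := t.end_mem_support
    rw [support_eq_cons, List.mem_cons] at hzt
    rcases hzt with h | h
    · exact hne h
    · exact h3 _ h _ hzd rfl

/-- The pairwise intersections of the three arcs of a triangle-shaped cycle. -/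
lemma myTriInter {a b c : V} {p : G.Walk a b} {q : G.Walk b c} {r : G.Walk c a}
    (h : ((p.append q).append r).IsCycle) (hab : a ≠ b) (hbc : b ≠ c) (hca : c ≠ a) :
    (∀ x, x ∈ p.support → x ∈ q.support → x = b) ∧
    (∀ x, x ∈ q.support → x ∈ r.support → x = c) ∧
    (∀ x, x ∈ p.support → x ∈ r.support → x = a) := by
  have hnodup : ((p.append q).append r).support.tail.Nodup := ((isCycle_def _).mp h).2.2
  rw [tail_support_append, tail_support_append] at hnodup
  rw [List.nodup_append] at hnodup
  obtain ⟨hpq, hr, hdis⟩ := hnodup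
  rw [List.nodup_append] at hpq
  obtain ⟨hpn, hqn, hpqd⟩ := hpq
  have hdp : ∀ x, x ∈ p.support.tail → x ∉ r.support.tail := fun x hx hr =>
    hdis x (List.mem_append_left _ hx) x hr rfl
  have hdq : ∀ x, x ∈ q.support.tail → x ∉ r.support.tail := fun x hx hr =>
    hdis x (List.mem_append_right _ hx) x hr rfl
  have hbp : b ∈ p.support.tail := by
    have := p.end_mem_support
    rw [support_eq_cons, List.mem_cons] at this
    rcases this with h' | h'
    · exact absurd h'.symm hab
    · exact h'
  have hcq : c ∈ q.support.tail := by
    have := q.end_mem_support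
    rw [support_eq_cons, List.mem_cons] at this
    rcases this with h' | h'
    · exact absurd h'.symm hbc
    · exact h'
  have har : a ∈ r.support.tail := by
    have := r.end_mem_support
    rw [support_eq_cons, List.mem_cons] at this
    rcases this with h' | h'
    · exact absurd h'.symm hca
    · exact h'
  refine ⟨?_, ?_, ?_⟩
  · intro x hxp hxq
    rw [support_eq_cons, List.mem_cons] at hxp hxq
    rcases hxq with rfl | hxq
    · rfl
    rcases hxp with rfl | hxp
    · exact absurd har (hdq x hxq)
    · exact absurd hxq (fun h => hpqd x hxp x h rfl)
  · intro x hxq hxr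
    rw [support_eq_cons, List.mem_cons] at hxq hxr
    rcases hxq with hxb | hxq
    · rcases hxr with hxc | hxr
      · exact absurd (hxb.symm.trans hxc) hbc
      · exact absurd (hxb ▸ hxr) (hdp b hbp)
    · rcases hxr with hxc | hxr
      · exact hxc
      · exact absurd hxr (hdq x hxq)
  · intro x hxp hxr
    rw [support_eq_cons, List.mem_cons] at hxp hxr
    rcases hxp with hxa | hxp
    · exact hxa
    · rcases hxr with hxc | hxr
      · exact absurd hcq (fun h => hpqd c (hxc ▸ hxp) c h rfl)
      · exact absurd hxr (hdp x hxp)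

/-- Extract the cycle-length lower bound from the girth hypothesis. -/
lemma myGirthBound {l : ℕ} (hl : 2 ≤ l) (hg : G.girth = 2 * l + 1) :
    ∀ (v : V) (w : G.Walk v v), w.IsCycle → 2 * l + 1 ≤ w.length := by
  intro v w hw
  have hnotacyclic : ¬ G.IsAcyclic := fun h => h w hw
  have hne : G.egirth ≠ ⊤ := by
    rw [Ne, egirth_eq_top]; exact hnotacyclic
  have heq : G.egirth = (G.girth : ℕ∞) := (ENat.coe_toNat hne).symm
  have h3 : G.egirth ≤ (w.length : ℕ∞) := le_egirth.mp (le_refl G.egirth) v w hw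
  rw [heq, hg] at h3
  exact_mod_cast h3

/-- A vertex outside a (2l+1)-cycle cannot have two neighbours on it. -/
lemma myHoleTwoNbrs [DecidableEq V] {l : ℕ} (hl : 2 ≤ l)
    (hgirth : ∀ (v : V) (w : G.Walk v v), w.IsCycle → 2 * l + 1 ≤ w.length)
    {v x y z : V} {w : G.Walk v v} (hw : w.IsCycle) (hwlen : w.length = 2 * l + 1)
    (hy : y ∈ w.support) (hz : z ∈ w.support) (hyz : y ≠ z)
    (hx : x ∉ w.support) (hxy : G.Adj x y) (hxz : G.Adj x z) : False := by
  -- rotate the cycle to start at y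
  have hw' : (w.rotate y hy).IsCycle := hw.rotate hy
  set w' : G.Walk y y := w.rotate y hy with hw'def
  have hsub : ∀ a, a ∈ w'.support → a ∈ w.support := by
    intro a ha
    have : a ∈ ((w.dropUntil y hy).append (w.takeUntil y hy)).support := ha
    rw [mem_support_append_iff] at this
    rcases this with h | h
    · exact w.support_dropUntil_subset hy h
    · exact w.support_takeUntil_subset hy h
  have hz' : z ∈ w'.support := by
    have hzsplit : z ∈ (w.takeUntil y hy).support ∨ z ∈ (w.dropUntil y hy).support := by
      have := w.take_spec hy
      rw [← this, mem_support_append_iff] at hz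
      exact hz
    show z ∈ ((w.dropUntil y hy).append (w.takeUntil y hy)).support
    rw [mem_support_append_iff]
    exact hzsplit.symm
  have hlenw' : w'.length = 2 * l + 1 := by
    have h1 := congrArg Walk.length (w.take_spec hy)
    rw [length_append] at h1
    have h2 : w'.length = (w.dropUntil y hy).length + (w.takeUntil y hy).length := by
      show ((w.dropUntil y hy).append (w.takeUntil y hy)).length = _
      rw [length_append]
    omega
  obtain ⟨htp, hdp⟩ := myCycleSplit hw' hz' (hyz.symm)
  set t := w'.takeUntil z hz' with htdef
  set d := w'.dropUntil z hz' with hddef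
  have hsum : t.length + d.length = 2 * l + 1 := by
    have h1 := congrArg Walk.length (w'.take_spec hz')
    rw [length_append] at h1
    rw [htdef, hddef]
    omega
  have htsub : ∀ a, a ∈ t.support → a ∈ w.support := fun a ha =>
    hsub a (w'.support_takeUntil_subset hz' ha)
  have hdsub : ∀ a, a ∈ d.support → a ∈ w.support := fun a ha =>
    hsub a (w'.support_dropUntil_subset hz' ha)
  have hxy' : x ≠ y := fun h => hx (h ▸ hy)
  have hxz' : x ≠ z := fun h => hx (h ▸ hz)
  rcases le_or_gt t.length l with hshort | hlong
  · -- use t : y → z, close with z-x-y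
    set q : G.Walk z y := Walk.cons hxz.symm (Walk.cons hxy Walk.nil) with hqdef
    have hqp : q.IsPath := by
      rw [hqdef]
      refine IsPath.cons (IsPath.cons IsPath.nil ?_) ?_
      · simp only [support_nil, List.mem_singleton]; exact hxy'
      · simp only [support_cons, support_nil, List.mem_cons, List.not_mem_nil, or_false]
        push_neg
        exact ⟨Ne.symm hxz', hyz.symm⟩
    have hcyc : (t.append q).IsCycle := by
      refine myCycleAppend hyz htp hqp ?_ ?_
      · intro a hat haq
        rw [hqdef] at haq
        simp only [support_cons, support_nil, List.mem_cons, List.not_mem_nil,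
          or_false] at haq
        rcases haq with rfl | rfl | rfl
        · right; rfl
        · exact absurd (htsub a hat) hx
        · left; rfl
      · have : 1 ≤ t.length := by
          rcases Nat.eq_zero_or_pos t.length with h0 | h1
          · exact absurd (Walk.eq_of_length_eq_zero h0) hyz
          · exact h1
        have : q.length = 2 := by rw [hqdef]; rfl
        omega
    have := hgirth y (t.append q) hcyc
    rw [length_append] at this
    have hq2 : q.length = 2 := by rw [hqdef]; rfl
    omega
  · -- use d : z → y, close with y-x-z
    set q : G.Walk y z := Walk.cons hxy.symm (Walk.cons hxz Walk.nil) with hqdef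
    have hqp : q.IsPath := by
      rw [hqdef]
      refine IsPath.cons (IsPath.cons IsPath.nil ?_) ?_
      · simp only [support_nil, List.mem_singleton]; exact hxz'
      · simp only [support_cons, support_nil, List.mem_cons, List.not_mem_nil, or_false]
        push_neg
        exact ⟨Ne.symm hxy', hyz⟩
    have hcyc : (d.append q).IsCycle := by
      refine myCycleAppend hyz.symm hdp hqp ?_ ?_
      · intro a had haq
        rw [hqdef] at haq
        simp only [support_cons, support_nil, List.mem_cons, List.not_mem_nil,
          or_false] at haq
        rcases haq with rfl | rfl | rfl
        · right; rfl
        · exact absurd (hdsub a had) hx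
        · left; rfl
      · have : 1 ≤ d.length := by
          rcases Nat.eq_zero_or_pos d.length with h0 | h1
          · exact absurd (Walk.eq_of_length_eq_zero h0) hyz.symm
          · exact h1
        have : q.length = 2 := by rw [hqdef]; rfl
        omega
    have := hgirth z (d.append q) hcyc
    rw [length_append] at this
    have hq2 : q.length = 2 := by rw [hqdef]; rfl
    omega

/-- Core counting argument: a short connection between interior vertices of two
vertex-disjoint arrises of an odd `K4`-subdivision contradicts the girth bound. -/
lemma myOppArris [DecidableEq V] {l : ℕ} (hl : 2 ≤ l)
    (hgirth : ∀ (v : V) (w : G.Walk v v), w.IsCycle → 2 * l + 1 ≤ w.length)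
    {w1 w2 w3 w4 : V}
    {A1 : G.Walk w1 w2} {A2 : G.Walk w3 w4} {B1 : G.Walk w2 w3} {B2 : G.Walk w1 w4}
    {D1 : G.Walk w1 w3} {D2 : G.Walk w2 w4}
    (hA1 : A1.IsPath) (hA2 : A2.IsPath)
    (hAA : ∀ a ∈ A1.support, a ∉ A2.support)
    (hA1B1 : ∀ a ∈ A1.support, a ∈ B1.support → a = w2)
    (hA1B2 : ∀ a ∈ A1.support, a ∈ B2.support → a = w1)
    (hA1D1 : ∀ a ∈ A1.support, a ∈ D1.support → a = w1)
    (hA1D2 : ∀ a ∈ A1.support, a ∈ D2.support → a = w2)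
    (hA2B1 : ∀ a ∈ A2.support, a ∈ B1.support → a = w3)
    (hA2B2 : ∀ a ∈ A2.support, a ∈ B2.support → a = w4)
    (hA2D1 : ∀ a ∈ A2.support, a ∈ D1.support → a = w3)
    (hA2D2 : ∀ a ∈ A2.support, a ∈ D2.support → a = w4)
    (hB1p : B1.IsPath) (hB2p : B2.IsPath) (hD1p : D1.IsPath) (hD2p : D2.IsPath)
    (hlensum : A1.length + B1.length + D1.length = 2 * l + 1)
    (hB : B2.length = B1.length) (hD : D2.length = D1.length)
    (ha : A1.length = A2.length) (haa : A1.length ≤ l)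
    {y z : V} (hy : y ∈ A1.support) (hz : z ∈ A2.support)
    (hyB1 : y ∉ B1.support) (hyB2 : y ∉ B2.support)
    (hzB1 : z ∉ B1.support) (hzB2 : z ∉ B2.support)
    {T : G.Walk z y} (hT : T.IsPath)
    (hTm : T.length = 1 ∨ (T.length = 2 ∧ 3 ≤ l))
    (hTsup : ∀ a ∈ T.support, a ≠ z → a ≠ y →
      a ∉ A1.support ∧ a ∉ A2.support ∧ a ∉ B1.support ∧ a ∉ B2.support ∧
        a ∉ D1.support ∧ a ∉ D2.support) : False := by
  have hyz : y ≠ z := fun h => hAA y hy (h ▸ hz)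
  have hyw1 : y ≠ w1 := fun h => hyB2 (h ▸ B2.start_mem_support)
  have hyw2 : y ≠ w2 := fun h => hyB1 (h ▸ B1.start_mem_support)
  have hzw3 : z ≠ w3 := fun h => hzB1 (h ▸ B1.end_mem_support)
  have hzw4 : z ≠ w4 := fun h => hzB2 (h ▸ B2.end_mem_support)
  set t1 := A1.takeUntil y hy with ht1
  set d1 := A1.dropUntil y hy with hd1
  set t2 := A2.takeUntil z hz with ht2
  set d2 := A2.dropUntil z hz with hd2
  have ht1p : t1.IsPath := hA1.takeUntil hy
  have hd1p : d1.IsPath := hA1.dropUntil hy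
  have ht2p : t2.IsPath := hA2.takeUntil hz
  have hd2p : d2.IsPath := hA2.dropUntil hz
  have hsum1 : t1.length + d1.length = A1.length := by
    have h1 := congrArg Walk.length (A1.take_spec hy)
    rw [length_append] at h1
    rw [ht1, hd1]; omega
  have hsum2 : t2.length + d2.length = A2.length := by
    have h1 := congrArg Walk.length (A2.take_spec hz)
    rw [length_append] at h1
    rw [ht2, hd2]; omega
  have hx1 : 1 ≤ t1.length := by
    rcases Nat.eq_zero_or_pos t1.length with h0 | h1
    · exact absurd (Walk.eq_of_length_eq_zero h0).symm hyw1
    · exact h1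
  have hx2 : 1 ≤ d1.length := by
    rcases Nat.eq_zero_or_pos d1.length with h0 | h1
    · exact absurd (Walk.eq_of_length_eq_zero h0) hyw2
    · exact h1
  have hy1 : 1 ≤ t2.length := by
    rcases Nat.eq_zero_or_pos t2.length with h0 | h1
    · exact absurd (Walk.eq_of_length_eq_zero h0).symm hzw3
    · exact h1
  have hy2 : 1 ≤ d2.length := by
    rcases Nat.eq_zero_or_pos d2.length with h0 | h1
    · exact absurd (Walk.eq_of_length_eq_zero h0) hzw4
    · exact h1
  have ht1sub : ∀ a ∈ t1.support, a ∈ A1.support := fun a h =>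
    A1.support_takeUntil_subset hy h
  have hd1sub : ∀ a ∈ d1.support, a ∈ A1.support := fun a h =>
    A1.support_dropUntil_subset hy h
  have ht2sub : ∀ a ∈ t2.support, a ∈ A2.support := fun a h =>
    A2.support_takeUntil_subset hz h
  have hd2sub : ∀ a ∈ d2.support, a ∈ A2.support := fun a h =>
    A2.support_dropUntil_subset hz h
  -- generic route assembly
  have route : ∀ (R : G.Walk y z), R.IsPath → 2 ≤ R.length →
      (∀ a ∈ R.support, a ∈ A1.support ∨ a ∈ A2.support ∨ a ∈ B1.support ∨
        a ∈ B2.support ∨ a ∈ D1.support ∨ a ∈ D2.support) →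
      2 * l + 1 ≤ R.length + T.length := by
    intro R hR hRlen hRsub
    have hmeet : ∀ a, a ∈ R.support → a ∈ T.support → a = y ∨ a = z := by
      intro a haR haT
      by_cases h1 : a = z
      · right; exact h1
      by_cases h2 : a = y
      · left; exact h2
      obtain ⟨n1, n2, n3, n4, n5, n6⟩ := hTsup a haT h1 h2
      rcases hRsub a haR with h | h | h | h | h | h
      exacts [absurd h n1, absurd h n2, absurd h n3, absurd h n4, absurd h n5,
        absurd h n6]
    have hlen3 : 3 ≤ R.length + T.length := by
      rcases hTm with h | ⟨h, -⟩ <;> omega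
    have hcyc : (R.append T).IsCycle := myCycleAppend hyz hR hT hmeet hlen3
    have := hgirth y (R.append T) hcyc
    rwa [length_append] at this
  -- route 1 : y → w1 → w3 → z
  have hR1 : 2 * l + 1 ≤ (t1.length + D1.length + t2.length) + T.length := by
    have hinner : (t1.reverse.append D1).IsPath := by
      refine myPathAppend (ht1p.reverse) hD1p ?_
      intro a h1 h2
      rw [support_reverse, List.mem_reverse] at h1
      exact hA1D1 a (ht1sub a h1) h2
    have hRp : ((t1.reverse.append D1).append t2).IsPath := by
      refine myPathAppend hinner ht2p ?_
      intro a h1 h2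
      rw [mem_support_append_iff] at h1
      rw [support_reverse, List.mem_reverse] at h1
      rcases h1 with h1 | h1
      · exact absurd (ht2sub a h2) (hAA a (ht1sub a h1))
      · exact hA2D1 a (ht2sub a h2) h1
    have := route _ hRp
      (by rw [length_append, length_append, length_reverse]; omega) ?_
    · rw [length_append, length_append, length_reverse] at this
      exact this
    · intro a ha
      rw [mem_support_append_iff, mem_support_append_iff, support_reverse,
        List.mem_reverse] at ha
      rcases ha with (h | h) | h
      · exact Or.inl (ht1sub a h)
      · exact Or.inr (Or.inr (Or.inr (Or.inr (Or.inl h))))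
      · exact Or.inr (Or.inl (ht2sub a h))
  -- route 2 : y → w1 → w4 → z
  have hR2 : 2 * l + 1 ≤ (t1.length + B2.length + d2.length) + T.length := by
    have hinner : (t1.reverse.append B2).IsPath := by
      refine myPathAppend (ht1p.reverse) hB2p ?_
      intro a h1 h2
      rw [support_reverse, List.mem_reverse] at h1
      exact hA1B2 a (ht1sub a h1) h2
    have hRp : ((t1.reverse.append B2).append d2.reverse).IsPath := by
      refine myPathAppend hinner hd2p.reverse ?_
      intro a h1 h2
      rw [mem_support_append_iff] at h1
      rw [support_reverse, List.mem_reverse] at h1 h2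
      rcases h1 with h1 | h1
      · exact absurd (hd2sub a h2) (hAA a (ht1sub a h1))
      · exact hA2B2 a (hd2sub a h2) h1
    have := route _ hRp
      (by rw [length_append, length_append, length_reverse, length_reverse]; omega) ?_
    · rw [length_append, length_append, length_reverse, length_reverse] at this
      exact this
    · intro a ha
      rw [mem_support_append_iff, mem_support_append_iff, support_reverse,
        support_reverse, List.mem_reverse, List.mem_reverse] at ha
      rcases ha with (h | h) | h
      · exact Or.inl (ht1sub a h)
      · exact Or.inr (Or.inr (Or.inr (Or.inl h)))
      · exact Or.inr (Or.inl (hd2sub a h))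
  -- route 3 : y → w2 → w3 → z
  have hR3 : 2 * l + 1 ≤ (d1.length + B1.length + t2.length) + T.length := by
    have hinner : (d1.append B1).IsPath := by
      refine myPathAppend hd1p hB1p ?_
      intro a h1 h2
      exact hA1B1 a (hd1sub a h1) h2
    have hRp : ((d1.append B1).append t2).IsPath := by
      refine myPathAppend hinner ht2p ?_
      intro a h1 h2
      rw [mem_support_append_iff] at h1
      rcases h1 with h1 | h1
      · exact absurd (ht2sub a h2) (hAA a (hd1sub a h1))
      · exact hA2B1 a (ht2sub a h2) h1
    have := route _ hRp
      (by rw [length_append, length_append]; omega) ?_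
    · rw [length_append, length_append] at this
      exact this
    · intro a ha
      rw [mem_support_append_iff, mem_support_append_iff] at ha
      rcases ha with (h | h) | h
      · exact Or.inl (hd1sub a h)
      · exact Or.inr (Or.inr (Or.inl h))
      · exact Or.inr (Or.inl (ht2sub a h))
  -- route 4 : y → w2 → w4 → z
  have hR4 : 2 * l + 1 ≤ (d1.length + D2.length + d2.length) + T.length := by
    have hinner : (d1.append D2).IsPath := by
      refine myPathAppend hd1p hD2p ?_
      intro a h1 h2
      exact hA1D2 a (hd1sub a h1) h2
    have hRp : ((d1.append D2).append d2.reverse).IsPath := by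
      refine myPathAppend hinner hd2p.reverse ?_
      intro a h1 h2
      rw [mem_support_append_iff] at h1
      rw [support_reverse, List.mem_reverse] at h2
      rcases h1 with h1 | h1
      · exact absurd (hd2sub a h2) (hAA a (hd1sub a h1))
      · exact hA2D2 a (hd2sub a h2) h1
    have := route _ hRp
      (by rw [length_append, length_append, length_reverse]; omega) ?_
    · rw [length_append, length_append, length_reverse] at this
      exact this
    · intro a ha
      rw [mem_support_append_iff, mem_support_append_iff, support_reverse,
        List.mem_reverse] at ha
      rcases ha with (h | h) | h
      · exact Or.inl (hd1sub a h)
      · exact Or.inr (Or.inr (Or.inr (Or.inr (Or.inr h))))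
      · exact Or.inr (Or.inl (hd2sub a h))
  rcases hTm with hm | ⟨hm, hl3⟩ <;> omega

end AuxLemmas

/-- For `l ≥ 2` and an odd `K4`-subdivision `H` in `G ∈ 𝒢ₗ`:
(1) vertex-disjoint pairs of arrises have the same length and all arrises have
length at most `l`; (2) `H` is induced; (3) if `l ≥ 3`, no vertex outside `H`
has two or more neighbours in `H`. -/
theorem odd_K4_subdivision_properties {V : Type*} [Fintype V]
    (l : ℕ) (hl : 2 ≤ l) (G : SimpleGraph V) (hG : MemGFam G l)
    (H : K4Sub G) (hH : IsOddK4 G H) :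
    (H.P1.length = H.P2.length ∧ H.Q1.length = H.Q2.length ∧ H.L1.length = H.L2.length ∧
      H.P1.length ≤ l ∧ H.Q1.length ≤ l ∧ H.L1.length ≤ l) ∧
    (∀ a ∈ K4Sub.verts H, ∀ b ∈ K4Sub.verts H, G.Adj a b → s(a, b) ∈ K4Sub.edges H) ∧
    (3 ≤ l → ∀ x : V, x ∉ K4Sub.verts H →
      ∀ y ∈ K4Sub.verts H, ∀ z ∈ K4Sub.verts H, G.Adj x y → G.Adj x z → y = z) := by
  classical
  obtain ⟨hgg, hnoodd⟩ := hG
  have hgirth := myGirthBound hl hgg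
  obtain ⟨hO1, hO2, hO3, hO4⟩ := hH
  have h12 : H.u1 ≠ H.u2 := by have := H.hu; simp at this; tauto
  have h13 : H.u1 ≠ H.u3 := by have := H.hu; simp at this; tauto
  have h14 : H.u1 ≠ H.u4 := by have := H.hu; simp at this; tauto
  have h23 : H.u2 ≠ H.u3 := by have := H.hu; simp at this; tauto
  have h24 : H.u2 ≠ H.u4 := by have := H.hu; simp at this; tauto
  have h34 : H.u3 ≠ H.u4 := by have := H.hu; simp at this; tauto
  have hc1 : H.C1.IsCycle := hO1.1.1
  have hc2 : H.C2.IsCycle := hO2.1.1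
  have hc3 : H.C3.IsCycle := hO3.1.1
  have hc4 : H.C4.IsCycle := hO4.1.1
  -- lengths of the face cycles
  have lenC1 : H.C1.length = H.P1.length + H.Q1.length + H.L1.length := by
    show ((H.P1.append H.Q1).append H.L1.reverse).length = _
    rw [Walk.length_append, Walk.length_append, Walk.length_reverse]
  have lenC2 : H.C2.length = H.P1.length + H.L2.length + H.Q2.length := by
    show ((H.P1.append H.L2).append H.Q2.reverse).length = _
    rw [Walk.length_append, Walk.length_append, Walk.length_reverse]
  have lenC3 : H.C3.length = H.Q1.length + H.P2.length + H.L2.length := by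
    show ((H.Q1.append H.P2).append H.L2.reverse).length = _
    rw [Walk.length_append, Walk.length_append, Walk.length_reverse]
  have lenC4 : H.C4.length = H.L1.length + H.P2.length + H.Q2.length := by
    show ((H.L1.append H.P2).append H.Q2.reverse).length = _
    rw [Walk.length_append, Walk.length_append, Walk.length_reverse]
  have e1 : H.C1.length = 2 * l + 1 := by
    have hlb := hgirth _ _ hc1
    have hub := hnoodd _ _ hO1
    obtain ⟨k, hk⟩ := hO1.2
    omega
  have e2 : H.C2.length = 2 * l + 1 := by
    have hlb := hgirth _ _ hc2
    have hub := hnoodd _ _ hO2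
    obtain ⟨k, hk⟩ := hO2.2
    omega
  have e3 : H.C3.length = 2 * l + 1 := by
    have hlb := hgirth _ _ hc3
    have hub := hnoodd _ _ hO3
    obtain ⟨k, hk⟩ := hO3.2
    omega
  have e4 : H.C4.length = 2 * l + 1 := by
    have hlb := hgirth _ _ hc4
    have hub := hnoodd _ _ hO4
    obtain ⟨k, hk⟩ := hO4.2
    omega
  have hP1pos : 1 ≤ H.P1.length := by
    rcases Nat.eq_zero_or_pos H.P1.length with h0 | h1
    · exact absurd (Walk.eq_of_length_eq_zero h0) h12
    · exact h1
  have hQ1pos : 1 ≤ H.Q1.length := by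
    rcases Nat.eq_zero_or_pos H.Q1.length with h0 | h1
    · exact absurd (Walk.eq_of_length_eq_zero h0) h23
    · exact h1
  have hL1pos : 1 ≤ H.L1.length := by
    rcases Nat.eq_zero_or_pos H.L1.length with h0 | h1
    · exact absurd (Walk.eq_of_length_eq_zero h0) h13
    · exact h1
  have eqP : H.P1.length = H.P2.length := by omega
  have eqQ : H.Q1.length = H.Q2.length := by omega
  have eqL : H.L1.length = H.L2.length := by omega
  have hsum : H.P1.length + H.Q1.length + H.L1.length = 2 * l + 1 := by omega
  -- intersections of arrises from the face cycles
  obtain ⟨iP1Q1, iQ1L1', iP1L1'⟩ :=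
    myTriInter (p := H.P1) (q := H.Q1) (r := H.L1.reverse) hc1 h12 h23 h13.symm
  have iQ1L1 : ∀ x ∈ H.Q1.support, x ∈ H.L1.support → x = H.u3 := fun x h1 h2 =>
    iQ1L1' x h1 (by rwa [Walk.support_reverse, List.mem_reverse])
  have iP1L1 : ∀ x ∈ H.P1.support, x ∈ H.L1.support → x = H.u1 := fun x h1 h2 =>
    iP1L1' x h1 (by rwa [Walk.support_reverse, List.mem_reverse])
  obtain ⟨iP1L2, iL2Q2', iP1Q2'⟩ :=
    myTriInter (p := H.P1) (q := H.L2) (r := H.Q2.reverse) hc2 h12 h24 h14.symm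
  have iL2Q2 : ∀ x ∈ H.L2.support, x ∈ H.Q2.support → x = H.u4 := fun x h1 h2 =>
    iL2Q2' x h1 (by rwa [Walk.support_reverse, List.mem_reverse])
  have iP1Q2 : ∀ x ∈ H.P1.support, x ∈ H.Q2.support → x = H.u1 := fun x h1 h2 =>
    iP1Q2' x h1 (by rwa [Walk.support_reverse, List.mem_reverse])
  obtain ⟨iQ1P2, iP2L2', iQ1L2'⟩ :=
    myTriInter (p := H.Q1) (q := H.P2) (r := H.L2.reverse) hc3 h23 h34 h24.symm
  have iP2L2 : ∀ x ∈ H.P2.support, x ∈ H.L2.support → x = H.u4 := fun x h1 h2 =>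
    iP2L2' x h1 (by rwa [Walk.support_reverse, List.mem_reverse])
  have iQ1L2 : ∀ x ∈ H.Q1.support, x ∈ H.L2.support → x = H.u2 := fun x h1 h2 =>
    iQ1L2' x h1 (by rwa [Walk.support_reverse, List.mem_reverse])
  obtain ⟨iL1P2, iP2Q2', iL1Q2'⟩ :=
    myTriInter (p := H.L1) (q := H.P2) (r := H.Q2.reverse) hc4 h13 h34 h14.symm
  have iP2Q2 : ∀ x ∈ H.P2.support, x ∈ H.Q2.support → x = H.u4 := fun x h1 h2 =>
    iP2Q2' x h1 (by rwa [Walk.support_reverse, List.mem_reverse])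
  have iL1Q2 : ∀ x ∈ H.L1.support, x ∈ H.Q2.support → x = H.u1 := fun x h1 h2 =>
    iL1Q2' x h1 (by rwa [Walk.support_reverse, List.mem_reverse])
  -- the three "big" even cycles give the bounds ≤ l
  have boundL : H.L1.length ≤ l := by
    have hp : (H.P1.append H.Q1).IsPath := myPathAppend H.hP1 H.hQ1 iP1Q1
    have hq : (H.P2.append H.Q2.reverse).IsPath := by
      refine myPathAppend H.hP2 H.hQ2.reverse ?_
      intro x h1 h2
      rw [Walk.support_reverse, List.mem_reverse] at h2
      exact iP2Q2 x h1 h2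
    have hcyc : ((H.P1.append H.Q1).append (H.P2.append H.Q2.reverse)).IsCycle := by
      refine myCycleAppend h13 hp hq ?_ ?_
      · intro x hx1 hx2
        rw [Walk.mem_support_append_iff] at hx1 hx2
        rw [Walk.support_reverse, List.mem_reverse] at hx2
        rcases hx1 with h | h <;> rcases hx2 with h' | h'
        · exact absurd h' (H.hP x h)
        · exact Or.inl (iP1Q2 x h h')
        · exact Or.inr (iQ1P2 x h h')
        · exact absurd h' (H.hQ x h)
      · simp only [Walk.length_append, Walk.length_reverse]
        omega
    have := hgirth _ _ hcyc
    simp only [Walk.length_append, Walk.length_reverse] at this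
    omega
  have boundQ : H.Q1.length ≤ l := by
    have hp : (H.P1.append H.L2).IsPath := myPathAppend H.hP1 H.hL2 iP1L2
    have hq : (H.P2.reverse.append H.L1.reverse).IsPath := by
      refine myPathAppend H.hP2.reverse H.hL1.reverse ?_
      intro x h1 h2
      rw [Walk.support_reverse, List.mem_reverse] at h1 h2
      exact iL1P2 x h2 h1
    have hcyc : ((H.P1.append H.L2).append (H.P2.reverse.append H.L1.reverse)).IsCycle := by
      refine myCycleAppend h14 hp hq ?_ ?_
      · intro x hx1 hx2
        rw [Walk.mem_support_append_iff] at hx1 hx2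
        rw [Walk.support_reverse, List.mem_reverse] at hx2
        rw [Walk.support_reverse, List.mem_reverse] at hx2
        rcases hx1 with h | h <;> rcases hx2 with h' | h'
        · exact absurd h' (H.hP x h)
        · exact Or.inl (iP1L1 x h h')
        · exact Or.inr (iP2L2 x h' h)
        · exact absurd h (H.hL x h')
      · simp only [Walk.length_append, Walk.length_reverse]
        omega
    have := hgirth _ _ hcyc
    simp only [Walk.length_append, Walk.length_reverse] at this
    omega
  have boundP : H.P1.length ≤ l := by
    have hp : (H.Q1.append H.L1.reverse).IsPath := by
      refine myPathAppend H.hQ1 H.hL1.reverse ?_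
      intro x h1 h2
      rw [Walk.support_reverse, List.mem_reverse] at h2
      exact iQ1L1 x h1 h2
    have hq : (H.Q2.append H.L2.reverse).IsPath := by
      refine myPathAppend H.hQ2 H.hL2.reverse ?_
      intro x h1 h2
      rw [Walk.support_reverse, List.mem_reverse] at h2
      exact (iL2Q2 x h2 h1)
    have hcyc : ((H.Q1.append H.L1.reverse).append (H.Q2.append H.L2.reverse)).IsCycle := by
      refine myCycleAppend h12.symm hp hq ?_ ?_
      · intro x hx1 hx2
        rw [Walk.mem_support_append_iff] at hx1 hx2
        rw [Walk.support_reverse, List.mem_reverse] at hx1 hx2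
        rcases hx1 with h | h <;> rcases hx2 with h' | h'
        · exact absurd h' (H.hQ x h)
        · exact Or.inl (iQ1L2 x h h')
        · exact Or.inr (iL1Q2 x h h')
        · exact absurd h' (H.hL x h)
      · simp only [Walk.length_append, Walk.length_reverse]
        omega
    have := hgirth _ _ hcyc
    simp only [Walk.length_append, Walk.length_reverse] at this
    omega
  -- membership and edge helpers for the face cycles
  have memC1 : ∀ a, a ∈ H.C1.support ↔
      (a ∈ H.P1.support ∨ a ∈ H.Q1.support ∨ a ∈ H.L1.support) := by
    intro a
    show a ∈ ((H.P1.append H.Q1).append H.L1.reverse).support ↔ _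
    rw [Walk.mem_support_append_iff, Walk.mem_support_append_iff, Walk.support_reverse,
      List.mem_reverse, or_assoc]
  have memC2 : ∀ a, a ∈ H.C2.support ↔
      (a ∈ H.P1.support ∨ a ∈ H.L2.support ∨ a ∈ H.Q2.support) := by
    intro a
    show a ∈ ((H.P1.append H.L2).append H.Q2.reverse).support ↔ _
    rw [Walk.mem_support_append_iff, Walk.mem_support_append_iff, Walk.support_reverse,
      List.mem_reverse, or_assoc]
  have memC3 : ∀ a, a ∈ H.C3.support ↔
      (a ∈ H.Q1.support ∨ a ∈ H.P2.support ∨ a ∈ H.L2.support) := by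
    intro a
    show a ∈ ((H.Q1.append H.P2).append H.L2.reverse).support ↔ _
    rw [Walk.mem_support_append_iff, Walk.mem_support_append_iff, Walk.support_reverse,
      List.mem_reverse, or_assoc]
  have memC4 : ∀ a, a ∈ H.C4.support ↔
      (a ∈ H.L1.support ∨ a ∈ H.P2.support ∨ a ∈ H.Q2.support) := by
    intro a
    show a ∈ ((H.L1.append H.P2).append H.Q2.reverse).support ↔ _
    rw [Walk.mem_support_append_iff, Walk.mem_support_append_iff, Walk.support_reverse,
      List.mem_reverse, or_assoc]
  have edgesC1 : ∀ e ∈ H.C1.edges, e ∈ K4Sub.edges H := by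
    intro e he
    have h : e ∈ ((H.P1.append H.Q1).append H.L1.reverse).edges := he
    rw [Walk.edges_append, Walk.edges_append, Walk.edges_reverse] at h
    rcases List.mem_append.mp h with h' | h'
    · rcases List.mem_append.mp h' with h'' | h''
      · exact Or.inl h''
      · exact Or.inr (Or.inr (Or.inl h''))
    · exact Or.inr (Or.inr (Or.inr (Or.inr (Or.inl (List.mem_reverse.mp h')))))
  have edgesC2 : ∀ e ∈ H.C2.edges, e ∈ K4Sub.edges H := by
    intro e he
    have h : e ∈ ((H.P1.append H.L2).append H.Q2.reverse).edges := he
    rw [Walk.edges_append, Walk.edges_append, Walk.edges_reverse] at h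
    rcases List.mem_append.mp h with h' | h'
    · rcases List.mem_append.mp h' with h'' | h''
      · exact Or.inl h''
      · exact Or.inr (Or.inr (Or.inr (Or.inr (Or.inr h''))))
    · exact Or.inr (Or.inr (Or.inr (Or.inl (List.mem_reverse.mp h'))))
  have edgesC3 : ∀ e ∈ H.C3.edges, e ∈ K4Sub.edges H := by
    intro e he
    have h : e ∈ ((H.Q1.append H.P2).append H.L2.reverse).edges := he
    rw [Walk.edges_append, Walk.edges_append, Walk.edges_reverse] at h
    rcases List.mem_append.mp h with h' | h'
    · rcases List.mem_append.mp h' with h'' | h''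
      · exact Or.inr (Or.inr (Or.inl h''))
      · exact Or.inr (Or.inl h'')
    · exact Or.inr (Or.inr (Or.inr (Or.inr (Or.inr (List.mem_reverse.mp h')))))
  have edgesC4 : ∀ e ∈ H.C4.edges, e ∈ K4Sub.edges H := by
    intro e he
    have h : e ∈ ((H.L1.append H.P2).append H.Q2.reverse).edges := he
    rw [Walk.edges_append, Walk.edges_append, Walk.edges_reverse] at h
    rcases List.mem_append.mp h with h' | h'
    · rcases List.mem_append.mp h' with h'' | h''
      · exact Or.inr (Or.inr (Or.inr (Or.inr (Or.inl h''))))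
      · exact Or.inr (Or.inl h'')
    · exact Or.inr (Or.inr (Or.inr (Or.inl (List.mem_reverse.mp h'))))
  -- the three opposite-arris helpers
  have mrev : ∀ {x y : V} (p : G.Walk x y) (a : V), a ∈ p.reverse.support → a ∈ p.support := by
    intro x y p a h
    rwa [Walk.support_reverse, List.mem_reverse] at h
  have oppP : ∀ y ∈ H.P1.support, ∀ z ∈ H.P2.support,
      y ∉ H.Q1.support → y ∉ H.Q2.support → z ∉ H.Q1.support → z ∉ H.Q2.support →
      ∀ (T : G.Walk z y), T.IsPath → (T.length = 1 ∨ (T.length = 2 ∧ 3 ≤ l)) →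
      (∀ a ∈ T.support, a ≠ z → a ≠ y → a ∉ K4Sub.verts H) → False := by
    intro y hy z hz hy1 hy2 hz1 hz2 T hT hTm hTs
    refine myOppArris hl hgirth (A1 := H.P1) (A2 := H.P2) (B1 := H.Q1) (B2 := H.Q2)
      (D1 := H.L1) (D2 := H.L2) H.hP1 H.hP2 H.hP iP1Q1 iP1Q2 iP1L1 iP1L2
      (fun a h1 h2 => iQ1P2 a h2 h1) iP2Q2 (fun a h1 h2 => iL1P2 a h2 h1) iP2L2
      H.hQ1 H.hQ2 H.hL1 H.hL2 hsum eqQ.symm eqL.symm eqP boundP hy hz hy1 hy2 hz1 hz2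
      hT hTm ?_
    intro a ha ha1 ha2
    have hv := hTs a ha ha1 ha2
    exact ⟨fun h => hv (Or.inl h), fun h => hv (Or.inr (Or.inl h)),
      fun h => hv (Or.inr (Or.inr (Or.inl h))),
      fun h => hv (Or.inr (Or.inr (Or.inr (Or.inl h)))),
      fun h => hv (Or.inr (Or.inr (Or.inr (Or.inr (Or.inl h))))),
      fun h => hv (Or.inr (Or.inr (Or.inr (Or.inr (Or.inr h)))))⟩
  have oppQ : ∀ y ∈ H.Q1.support, ∀ z ∈ H.Q2.support,
      y ∉ H.L1.support → y ∉ H.L2.support → z ∉ H.L1.support → z ∉ H.L2.support →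
      ∀ (T : G.Walk z y), T.IsPath → (T.length = 1 ∨ (T.length = 2 ∧ 3 ≤ l)) →
      (∀ a ∈ T.support, a ≠ z → a ≠ y → a ∉ K4Sub.verts H) → False := by
    intro y hy z hz hy1 hy2 hz1 hz2 T hT hTm hTs
    refine myOppArris hl hgirth (A1 := H.Q1) (A2 := H.Q2) (B1 := H.L1.reverse)
      (B2 := H.L2) (D1 := H.P1.reverse) (D2 := H.P2) H.hQ1 H.hQ2 H.hQ
      (fun a h1 h2 => iQ1L1 a h1 (mrev _ a h2)) iQ1L2
      (fun a h1 h2 => iP1Q1 a (mrev _ a h2) h1) iQ1P2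
      (fun a h1 h2 => iL1Q2 a (mrev _ a h2) h1) (fun a h1 h2 => iL2Q2 a h2 h1)
      (fun a h1 h2 => iP1Q2 a (mrev _ a h2) h1) (fun a h1 h2 => iP2Q2 a h2 h1)
      H.hL1.reverse H.hL2 H.hP1.reverse H.hP2
      (by rw [Walk.length_reverse, Walk.length_reverse]; omega)
      (by rw [Walk.length_reverse]; omega) (by rw [Walk.length_reverse]; omega)
      eqQ boundQ hy hz (fun h => hy1 (mrev _ y h)) hy2 (fun h => hz1 (mrev _ z h)) hz2
      hT hTm ?_
    intro a ha ha1 ha2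
    have hv := hTs a ha ha1 ha2
    refine ⟨fun h => hv (Or.inr (Or.inr (Or.inl h))),
      fun h => hv (Or.inr (Or.inr (Or.inr (Or.inl h)))),
      fun h => hv (Or.inr (Or.inr (Or.inr (Or.inr (Or.inl (mrev _ a h)))))),
      fun h => hv (Or.inr (Or.inr (Or.inr (Or.inr (Or.inr h))))),
      fun h => hv (Or.inl (mrev _ a h)), fun h => hv (Or.inr (Or.inl h))⟩
  have oppL : ∀ y ∈ H.L1.support, ∀ z ∈ H.L2.support,
      y ∉ H.Q1.support → y ∉ H.Q2.support → z ∉ H.Q1.support → z ∉ H.Q2.support →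
      ∀ (T : G.Walk z y), T.IsPath → (T.length = 1 ∨ (T.length = 2 ∧ 3 ≤ l)) →
      (∀ a ∈ T.support, a ≠ z → a ≠ y → a ∉ K4Sub.verts H) → False := by
    intro y hy z hz hy1 hy2 hz1 hz2 T hT hTm hTs
    refine myOppArris hl hgirth (A1 := H.L1) (A2 := H.L2) (B1 := H.Q1.reverse)
      (B2 := H.Q2) (D1 := H.P1) (D2 := H.P2) H.hL1 H.hL2 H.hL
      (fun a h1 h2 => iQ1L1 a (mrev _ a h2) h1) iL1Q2
      (fun a h1 h2 => iP1L1 a h2 h1) iL1P2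
      (fun a h1 h2 => iQ1L2 a (mrev _ a h2) h1) iL2Q2
      (fun a h1 h2 => iP1L2 a h2 h1) (fun a h1 h2 => iP2L2 a h2 h1)
      H.hQ1.reverse H.hQ2 H.hP1 H.hP2
      (by rw [Walk.length_reverse]; omega)
      (by rw [Walk.length_reverse]; omega) eqP.symm
      eqL boundL hy hz (fun h => hy1 (mrev _ y h)) hy2 (fun h => hz1 (mrev _ z h)) hz2
      hT hTm ?_
    intro a ha ha1 ha2
    have hv := hTs a ha ha1 ha2
    refine ⟨fun h => hv (Or.inr (Or.inr (Or.inr (Or.inr (Or.inl h))))),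
      fun h => hv (Or.inr (Or.inr (Or.inr (Or.inr (Or.inr h))))),
      fun h => hv (Or.inr (Or.inr (Or.inl (mrev _ a h)))),
      fun h => hv (Or.inr (Or.inr (Or.inr (Or.inl h)))),
      fun h => hv (Or.inl h), fun h => hv (Or.inr (Or.inl h))⟩
  refine ⟨⟨eqP, eqQ, eqL, boundP, boundQ, boundL⟩, ?_, ?_⟩
  · -- Part (2): H is induced
    intro a ha b hb hadj
    have com1 : ∀ a' ∈ H.C1.support, ∀ b' ∈ H.C1.support, G.Adj a' b' →
        s(a', b') ∈ K4Sub.edges H := fun a' ha' b' hb' h =>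
      edgesC1 _ (hO1.1.2.2 a' ha' b' hb' h)
    have com2 : ∀ a' ∈ H.C2.support, ∀ b' ∈ H.C2.support, G.Adj a' b' →
        s(a', b') ∈ K4Sub.edges H := fun a' ha' b' hb' h =>
      edgesC2 _ (hO2.1.2.2 a' ha' b' hb' h)
    have com3 : ∀ a' ∈ H.C3.support, ∀ b' ∈ H.C3.support, G.Adj a' b' →
        s(a', b') ∈ K4Sub.edges H := fun a' ha' b' hb' h =>
      edgesC3 _ (hO3.1.2.2 a' ha' b' hb' h)
    have com4 : ∀ a' ∈ H.C4.support, ∀ b' ∈ H.C4.support, G.Adj a' b' →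
        s(a', b') ∈ K4Sub.edges H := fun a' ha' b' hb' h =>
      edgesC4 _ (hO4.1.2.2 a' ha' b' hb' h)
    have edgeT : ∀ {c d : V} (h : G.Adj c d), (Walk.cons h Walk.nil).IsPath := by
      intro c d h
      refine Walk.IsPath.cons Walk.IsPath.nil ?_
      simp only [Walk.support_nil, List.mem_singleton]
      exact h.ne
    have edgeTs : ∀ {c d : V} {h : G.Adj c d}, ∀ e ∈ (Walk.cons h Walk.nil).support,
        e ≠ c → e ≠ d → e ∉ K4Sub.verts H := by
      intro c d h e he hec hed
      simp only [Walk.support_cons, Walk.support_nil, List.mem_cons,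
        List.not_mem_nil, or_false] at he
      rcases he with rfl | rfl
      · exact absurd rfl hec
      · exact absurd rfl hed
    have ha' : a ∈ H.P1.support ∨ a ∈ H.P2.support ∨ a ∈ H.Q1.support ∨
        a ∈ H.Q2.support ∨ a ∈ H.L1.support ∨ a ∈ H.L2.support := ha
    have hb' : b ∈ H.P1.support ∨ b ∈ H.P2.support ∨ b ∈ H.Q1.support ∨
        b ∈ H.Q2.support ∨ b ∈ H.L1.support ∨ b ∈ H.L2.support := hb
    rcases ha' with hA | hA | hA | hA | hA | hA
    · rcases hb' with hB | hB | hB | hB | hB | hB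
      · exact com1 a ((memC1 a).mpr (Or.inl hA)) b ((memC1 b).mpr (Or.inl hB)) hadj
      · by_cases k1 : a ∈ H.Q1.support
        · exact com3 a ((memC3 a).mpr (Or.inl k1)) b ((memC3 b).mpr (Or.inr (Or.inl hB))) hadj
        by_cases k2 : a ∈ H.Q2.support
        · exact com4 a ((memC4 a).mpr (Or.inr (Or.inr k2))) b ((memC4 b).mpr (Or.inr (Or.inl hB))) hadj
        by_cases k3 : b ∈ H.Q1.support
        · exact com1 a ((memC1 a).mpr (Or.inl hA)) b ((memC1 b).mpr (Or.inr (Or.inl k3))) hadj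
        by_cases k4 : b ∈ H.Q2.support
        · exact com2 a ((memC2 a).mpr (Or.inl hA)) b ((memC2 b).mpr (Or.inr (Or.inr k4))) hadj
        exact (oppP a hA b hB k1 k2 k3 k4 (Walk.cons hadj.symm Walk.nil) (edgeT hadj.symm) (Or.inl rfl) edgeTs).elim
      · exact com1 a ((memC1 a).mpr (Or.inl hA)) b ((memC1 b).mpr (Or.inr (Or.inl hB))) hadj
      · exact com2 a ((memC2 a).mpr (Or.inl hA)) b ((memC2 b).mpr (Or.inr (Or.inr hB))) hadj
      · exact com1 a ((memC1 a).mpr (Or.inl hA)) b ((memC1 b).mpr (Or.inr (Or.inr hB))) hadj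
      · exact com2 a ((memC2 a).mpr (Or.inl hA)) b ((memC2 b).mpr (Or.inr (Or.inl hB))) hadj
    · rcases hb' with hB | hB | hB | hB | hB | hB
      · by_cases k1 : b ∈ H.Q1.support
        · exact com3 a ((memC3 a).mpr (Or.inr (Or.inl hA))) b ((memC3 b).mpr (Or.inl k1)) hadj
        by_cases k2 : b ∈ H.Q2.support
        · exact com4 a ((memC4 a).mpr (Or.inr (Or.inl hA))) b ((memC4 b).mpr (Or.inr (Or.inr k2))) hadj
        by_cases k3 : a ∈ H.Q1.support
        · exact com1 a ((memC1 a).mpr (Or.inr (Or.inl k3))) b ((memC1 b).mpr (Or.inl hB)) hadj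
        by_cases k4 : a ∈ H.Q2.support
        · exact com2 a ((memC2 a).mpr (Or.inr (Or.inr k4))) b ((memC2 b).mpr (Or.inl hB)) hadj
        exact (oppP b hB a hA k1 k2 k3 k4 (Walk.cons hadj Walk.nil) (edgeT hadj) (Or.inl rfl) edgeTs).elim
      · exact com3 a ((memC3 a).mpr (Or.inr (Or.inl hA))) b ((memC3 b).mpr (Or.inr (Or.inl hB))) hadj
      · exact com3 a ((memC3 a).mpr (Or.inr (Or.inl hA))) b ((memC3 b).mpr (Or.inl hB)) hadj
      · exact com4 a ((memC4 a).mpr (Or.inr (Or.inl hA))) b ((memC4 b).mpr (Or.inr (Or.inr hB))) hadj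
      · exact com4 a ((memC4 a).mpr (Or.inr (Or.inl hA))) b ((memC4 b).mpr (Or.inl hB)) hadj
      · exact com3 a ((memC3 a).mpr (Or.inr (Or.inl hA))) b ((memC3 b).mpr (Or.inr (Or.inr hB))) hadj
    · rcases hb' with hB | hB | hB | hB | hB | hB
      · exact com1 a ((memC1 a).mpr (Or.inr (Or.inl hA))) b ((memC1 b).mpr (Or.inl hB)) hadj
      · exact com3 a ((memC3 a).mpr (Or.inl hA)) b ((memC3 b).mpr (Or.inr (Or.inl hB))) hadj
      · exact com1 a ((memC1 a).mpr (Or.inr (Or.inl hA))) b ((memC1 b).mpr (Or.inr (Or.inl hB))) hadj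
      · by_cases k1 : a ∈ H.L1.support
        · exact com4 a ((memC4 a).mpr (Or.inl k1)) b ((memC4 b).mpr (Or.inr (Or.inr hB))) hadj
        by_cases k2 : a ∈ H.L2.support
        · exact com2 a ((memC2 a).mpr (Or.inr (Or.inl k2))) b ((memC2 b).mpr (Or.inr (Or.inr hB))) hadj
        by_cases k3 : b ∈ H.L1.support
        · exact com1 a ((memC1 a).mpr (Or.inr (Or.inl hA))) b ((memC1 b).mpr (Or.inr (Or.inr k3))) hadj
        by_cases k4 : b ∈ H.L2.support
        · exact com3 a ((memC3 a).mpr (Or.inl hA)) b ((memC3 b).mpr (Or.inr (Or.inr k4))) hadj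
        exact (oppQ a hA b hB k1 k2 k3 k4 (Walk.cons hadj.symm Walk.nil) (edgeT hadj.symm) (Or.inl rfl) edgeTs).elim
      · exact com1 a ((memC1 a).mpr (Or.inr (Or.inl hA))) b ((memC1 b).mpr (Or.inr (Or.inr hB))) hadj
      · exact com3 a ((memC3 a).mpr (Or.inl hA)) b ((memC3 b).mpr (Or.inr (Or.inr hB))) hadj
    · rcases hb' with hB | hB | hB | hB | hB | hB
      · exact com2 a ((memC2 a).mpr (Or.inr (Or.inr hA))) b ((memC2 b).mpr (Or.inl hB)) hadj
      · exact com4 a ((memC4 a).mpr (Or.inr (Or.inr hA))) b ((memC4 b).mpr (Or.inr (Or.inl hB))) hadj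
      · by_cases k1 : b ∈ H.L1.support
        · exact com4 a ((memC4 a).mpr (Or.inr (Or.inr hA))) b ((memC4 b).mpr (Or.inl k1)) hadj
        by_cases k2 : b ∈ H.L2.support
        · exact com2 a ((memC2 a).mpr (Or.inr (Or.inr hA))) b ((memC2 b).mpr (Or.inr (Or.inl k2))) hadj
        by_cases k3 : a ∈ H.L1.support
        · exact com1 a ((memC1 a).mpr (Or.inr (Or.inr k3))) b ((memC1 b).mpr (Or.inr (Or.inl hB))) hadj
        by_cases k4 : a ∈ H.L2.support
        · exact com3 a ((memC3 a).mpr (Or.inr (Or.inr k4))) b ((memC3 b).mpr (Or.inl hB)) hadj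
        exact (oppQ b hB a hA k1 k2 k3 k4 (Walk.cons hadj Walk.nil) (edgeT hadj) (Or.inl rfl) edgeTs).elim
      · exact com2 a ((memC2 a).mpr (Or.inr (Or.inr hA))) b ((memC2 b).mpr (Or.inr (Or.inr hB))) hadj
      · exact com4 a ((memC4 a).mpr (Or.inr (Or.inr hA))) b ((memC4 b).mpr (Or.inl hB)) hadj
      · exact com2 a ((memC2 a).mpr (Or.inr (Or.inr hA))) b ((memC2 b).mpr (Or.inr (Or.inl hB))) hadj
    · rcases hb' with hB | hB | hB | hB | hB | hB
      · exact com1 a ((memC1 a).mpr (Or.inr (Or.inr hA))) b ((memC1 b).mpr (Or.inl hB)) hadj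
      · exact com4 a ((memC4 a).mpr (Or.inl hA)) b ((memC4 b).mpr (Or.inr (Or.inl hB))) hadj
      · exact com1 a ((memC1 a).mpr (Or.inr (Or.inr hA))) b ((memC1 b).mpr (Or.inr (Or.inl hB))) hadj
      · exact com4 a ((memC4 a).mpr (Or.inl hA)) b ((memC4 b).mpr (Or.inr (Or.inr hB))) hadj
      · exact com1 a ((memC1 a).mpr (Or.inr (Or.inr hA))) b ((memC1 b).mpr (Or.inr (Or.inr hB))) hadj
      · by_cases k1 : a ∈ H.Q1.support
        · exact com3 a ((memC3 a).mpr (Or.inl k1)) b ((memC3 b).mpr (Or.inr (Or.inr hB))) hadj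
        by_cases k2 : a ∈ H.Q2.support
        · exact com2 a ((memC2 a).mpr (Or.inr (Or.inr k2))) b ((memC2 b).mpr (Or.inr (Or.inl hB))) hadj
        by_cases k3 : b ∈ H.Q1.support
        · exact com1 a ((memC1 a).mpr (Or.inr (Or.inr hA))) b ((memC1 b).mpr (Or.inr (Or.inl k3))) hadj
        by_cases k4 : b ∈ H.Q2.support
        · exact com4 a ((memC4 a).mpr (Or.inl hA)) b ((memC4 b).mpr (Or.inr (Or.inr k4))) hadj
        exact (oppL a hA b hB k1 k2 k3 k4 (Walk.cons hadj.symm Walk.nil) (edgeT hadj.symm) (Or.inl rfl) edgeTs).elim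
    · rcases hb' with hB | hB | hB | hB | hB | hB
      · exact com2 a ((memC2 a).mpr (Or.inr (Or.inl hA))) b ((memC2 b).mpr (Or.inl hB)) hadj
      · exact com3 a ((memC3 a).mpr (Or.inr (Or.inr hA))) b ((memC3 b).mpr (Or.inr (Or.inl hB))) hadj
      · exact com3 a ((memC3 a).mpr (Or.inr (Or.inr hA))) b ((memC3 b).mpr (Or.inl hB)) hadj
      · exact com2 a ((memC2 a).mpr (Or.inr (Or.inl hA))) b ((memC2 b).mpr (Or.inr (Or.inr hB))) hadj
      · by_cases k1 : b ∈ H.Q1.support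
        · exact com3 a ((memC3 a).mpr (Or.inr (Or.inr hA))) b ((memC3 b).mpr (Or.inl k1)) hadj
        by_cases k2 : b ∈ H.Q2.support
        · exact com2 a ((memC2 a).mpr (Or.inr (Or.inl hA))) b ((memC2 b).mpr (Or.inr (Or.inr k2))) hadj
        by_cases k3 : a ∈ H.Q1.support
        · exact com1 a ((memC1 a).mpr (Or.inr (Or.inl k3))) b ((memC1 b).mpr (Or.inr (Or.inr hB))) hadj
        by_cases k4 : a ∈ H.Q2.support
        · exact com4 a ((memC4 a).mpr (Or.inr (Or.inr k4))) b ((memC4 b).mpr (Or.inl hB)) hadj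
        exact (oppL b hB a hA k1 k2 k3 k4 (Walk.cons hadj Walk.nil) (edgeT hadj) (Or.inl rfl) edgeTs).elim
      · exact com2 a ((memC2 a).mpr (Or.inr (Or.inl hA))) b ((memC2 b).mpr (Or.inr (Or.inl hB))) hadj
  · -- Part (3): no vertex outside H has two neighbours in H
    intro hl3 x hx y hy z hz hxy hxz
    by_contra hne
    have com1' : y ∈ H.C1.support → z ∈ H.C1.support → False := fun h1 h2 =>
      myHoleTwoNbrs hl hgirth hc1 e1 h1 h2 hne
        (fun h => hx (by rcases (memC1 x).mp h with h' | h' | h'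
                         exacts [Or.inl h', Or.inr (Or.inr (Or.inl h')),
                           Or.inr (Or.inr (Or.inr (Or.inr (Or.inl h'))))])) hxy hxz
    have com2' : y ∈ H.C2.support → z ∈ H.C2.support → False := fun h1 h2 =>
      myHoleTwoNbrs hl hgirth hc2 e2 h1 h2 hne
        (fun h => hx (by rcases (memC2 x).mp h with h' | h' | h'
                         exacts [Or.inl h', Or.inr (Or.inr (Or.inr (Or.inr (Or.inr h')))),
                           Or.inr (Or.inr (Or.inr (Or.inl h')))])) hxy hxz
    have com3' : y ∈ H.C3.support → z ∈ H.C3.support → False := fun h1 h2 =>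
      myHoleTwoNbrs hl hgirth hc3 e3 h1 h2 hne
        (fun h => hx (by rcases (memC3 x).mp h with h' | h' | h'
                         exacts [Or.inr (Or.inr (Or.inl h')), Or.inr (Or.inl h'),
                           Or.inr (Or.inr (Or.inr (Or.inr (Or.inr h'))))])) hxy hxz
    have com4' : y ∈ H.C4.support → z ∈ H.C4.support → False := fun h1 h2 =>
      myHoleTwoNbrs hl hgirth hc4 e4 h1 h2 hne
        (fun h => hx (by rcases (memC4 x).mp h with h' | h' | h'
                         exacts [Or.inr (Or.inr (Or.inr (Or.inr (Or.inl h')))),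
                           Or.inr (Or.inl h'),
                           Or.inr (Or.inr (Or.inr (Or.inl h')))])) hxy hxz
    have hTpath : ∀ {c d : V} (h1 : G.Adj c x) (h2 : G.Adj x d), c ≠ d →
        c ∈ K4Sub.verts H → d ∈ K4Sub.verts H →
        (Walk.cons h1 (Walk.cons h2 Walk.nil)).IsPath := by
      intro c d h1 h2 hcd hcv hdv
      refine Walk.IsPath.cons (Walk.IsPath.cons Walk.IsPath.nil ?_) ?_
      · simp only [Walk.support_nil, List.mem_singleton]
        exact fun h => hx (h ▸ hdv)
      · simp only [Walk.support_cons, Walk.support_nil, List.mem_cons,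
          List.not_mem_nil, or_false]
        push_neg
        exact ⟨fun h => hx (h ▸ hcv), hcd⟩
    have edgeTs3 : ∀ {c d : V} {h1 : G.Adj c x} {h2 : G.Adj x d},
        ∀ e ∈ (Walk.cons h1 (Walk.cons h2 Walk.nil)).support, e ≠ c → e ≠ d →
          e ∉ K4Sub.verts H := by
      intro c d h1 h2 e he hec hed
      simp only [Walk.support_cons, Walk.support_nil, List.mem_cons,
        List.not_mem_nil, or_false] at he
      rcases he with rfl | rfl | rfl
      · exact absurd rfl hec
      · exact hx
      · exact absurd rfl hed
    have hy' : y ∈ H.P1.support ∨ y ∈ H.P2.support ∨ y ∈ H.Q1.support ∨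
        y ∈ H.Q2.support ∨ y ∈ H.L1.support ∨ y ∈ H.L2.support := hy
    have hz' : z ∈ H.P1.support ∨ z ∈ H.P2.support ∨ z ∈ H.Q1.support ∨
        z ∈ H.Q2.support ∨ z ∈ H.L1.support ∨ z ∈ H.L2.support := hz
    rcases hy' with hA | hA | hA | hA | hA | hA
    · rcases hz' with hB | hB | hB | hB | hB | hB
      · exact com1' ((memC1 y).mpr (Or.inl hA)) ((memC1 z).mpr (Or.inl hB))
      · by_cases k1 : y ∈ H.Q1.support
        · exact com3' ((memC3 y).mpr (Or.inl k1)) ((memC3 z).mpr (Or.inr (Or.inl hB)))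
        by_cases k2 : y ∈ H.Q2.support
        · exact com4' ((memC4 y).mpr (Or.inr (Or.inr k2))) ((memC4 z).mpr (Or.inr (Or.inl hB)))
        by_cases k3 : z ∈ H.Q1.support
        · exact com1' ((memC1 y).mpr (Or.inl hA)) ((memC1 z).mpr (Or.inr (Or.inl k3)))
        by_cases k4 : z ∈ H.Q2.support
        · exact com2' ((memC2 y).mpr (Or.inl hA)) ((memC2 z).mpr (Or.inr (Or.inr k4)))
        exact oppP y hA z hB k1 k2 k3 k4 (Walk.cons hxz.symm (Walk.cons hxy Walk.nil)) (hTpath hxz.symm hxy (Ne.symm hne) hz hy) (Or.inr ⟨rfl, hl3⟩) edgeTs3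
      · exact com1' ((memC1 y).mpr (Or.inl hA)) ((memC1 z).mpr (Or.inr (Or.inl hB)))
      · exact com2' ((memC2 y).mpr (Or.inl hA)) ((memC2 z).mpr (Or.inr (Or.inr hB)))
      · exact com1' ((memC1 y).mpr (Or.inl hA)) ((memC1 z).mpr (Or.inr (Or.inr hB)))
      · exact com2' ((memC2 y).mpr (Or.inl hA)) ((memC2 z).mpr (Or.inr (Or.inl hB)))
    · rcases hz' with hB | hB | hB | hB | hB | hB
      · by_cases k1 : z ∈ H.Q1.support
        · exact com3' ((memC3 y).mpr (Or.inr (Or.inl hA))) ((memC3 z).mpr (Or.inl k1))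
        by_cases k2 : z ∈ H.Q2.support
        · exact com4' ((memC4 y).mpr (Or.inr (Or.inl hA))) ((memC4 z).mpr (Or.inr (Or.inr k2)))
        by_cases k3 : y ∈ H.Q1.support
        · exact com1' ((memC1 y).mpr (Or.inr (Or.inl k3))) ((memC1 z).mpr (Or.inl hB))
        by_cases k4 : y ∈ H.Q2.support
        · exact com2' ((memC2 y).mpr (Or.inr (Or.inr k4))) ((memC2 z).mpr (Or.inl hB))
        exact oppP z hB y hA k1 k2 k3 k4 (Walk.cons hxy.symm (Walk.cons hxz Walk.nil)) (hTpath hxy.symm hxz hne hy hz) (Or.inr ⟨rfl, hl3⟩) edgeTs3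
      · exact com3' ((memC3 y).mpr (Or.inr (Or.inl hA))) ((memC3 z).mpr (Or.inr (Or.inl hB)))
      · exact com3' ((memC3 y).mpr (Or.inr (Or.inl hA))) ((memC3 z).mpr (Or.inl hB))
      · exact com4' ((memC4 y).mpr (Or.inr (Or.inl hA))) ((memC4 z).mpr (Or.inr (Or.inr hB)))
      · exact com4' ((memC4 y).mpr (Or.inr (Or.inl hA))) ((memC4 z).mpr (Or.inl hB))
      · exact com3' ((memC3 y).mpr (Or.inr (Or.inl hA))) ((memC3 z).mpr (Or.inr (Or.inr hB)))
    · rcases hz' with hB | hB | hB | hB | hB | hB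
      · exact com1' ((memC1 y).mpr (Or.inr (Or.inl hA))) ((memC1 z).mpr (Or.inl hB))
      · exact com3' ((memC3 y).mpr (Or.inl hA)) ((memC3 z).mpr (Or.inr (Or.inl hB)))
      · exact com1' ((memC1 y).mpr (Or.inr (Or.inl hA))) ((memC1 z).mpr (Or.inr (Or.inl hB)))
      · by_cases k1 : y ∈ H.L1.support
        · exact com4' ((memC4 y).mpr (Or.inl k1)) ((memC4 z).mpr (Or.inr (Or.inr hB)))
        by_cases k2 : y ∈ H.L2.support
        · exact com2' ((memC2 y).mpr (Or.inr (Or.inl k2))) ((memC2 z).mpr (Or.inr (Or.inr hB)))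
        by_cases k3 : z ∈ H.L1.support
        · exact com1' ((memC1 y).mpr (Or.inr (Or.inl hA))) ((memC1 z).mpr (Or.inr (Or.inr k3)))
        by_cases k4 : z ∈ H.L2.support
        · exact com3' ((memC3 y).mpr (Or.inl hA)) ((memC3 z).mpr (Or.inr (Or.inr k4)))
        exact oppQ y hA z hB k1 k2 k3 k4 (Walk.cons hxz.symm (Walk.cons hxy Walk.nil)) (hTpath hxz.symm hxy (Ne.symm hne) hz hy) (Or.inr ⟨rfl, hl3⟩) edgeTs3
      · exact com1' ((memC1 y).mpr (Or.inr (Or.inl hA))) ((memC1 z).mpr (Or.inr (Or.inr hB)))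
      · exact com3' ((memC3 y).mpr (Or.inl hA)) ((memC3 z).mpr (Or.inr (Or.inr hB)))
    · rcases hz' with hB | hB | hB | hB | hB | hB
      · exact com2' ((memC2 y).mpr (Or.inr (Or.inr hA))) ((memC2 z).mpr (Or.inl hB))
      · exact com4' ((memC4 y).mpr (Or.inr (Or.inr hA))) ((memC4 z).mpr (Or.inr (Or.inl hB)))
      · by_cases k1 : z ∈ H.L1.support
        · exact com4' ((memC4 y).mpr (Or.inr (Or.inr hA))) ((memC4 z).mpr (Or.inl k1))
        by_cases k2 : z ∈ H.L2.support
        · exact com2' ((memC2 y).mpr (Or.inr (Or.inr hA))) ((memC2 z).mpr (Or.inr (Or.inl k2)))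
        by_cases k3 : y ∈ H.L1.support
        · exact com1' ((memC1 y).mpr (Or.inr (Or.inr k3))) ((memC1 z).mpr (Or.inr (Or.inl hB)))
        by_cases k4 : y ∈ H.L2.support
        · exact com3' ((memC3 y).mpr (Or.inr (Or.inr k4))) ((memC3 z).mpr (Or.inl hB))
        exact oppQ z hB y hA k1 k2 k3 k4 (Walk.cons hxy.symm (Walk.cons hxz Walk.nil)) (hTpath hxy.symm hxz hne hy hz) (Or.inr ⟨rfl, hl3⟩) edgeTs3
      · exact com2' ((memC2 y).mpr (Or.inr (Or.inr hA))) ((memC2 z).mpr (Or.inr (Or.inr hB)))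
      · exact com4' ((memC4 y).mpr (Or.inr (Or.inr hA))) ((memC4 z).mpr (Or.inl hB))
      · exact com2' ((memC2 y).mpr (Or.inr (Or.inr hA))) ((memC2 z).mpr (Or.inr (Or.inl hB)))
    · rcases hz' with hB | hB | hB | hB | hB | hB
      · exact com1' ((memC1 y).mpr (Or.inr (Or.inr hA))) ((memC1 z).mpr (Or.inl hB))
      · exact com4' ((memC4 y).mpr (Or.inl hA)) ((memC4 z).mpr (Or.inr (Or.inl hB)))
      · exact com1' ((memC1 y).mpr (Or.inr (Or.inr hA))) ((memC1 z).mpr (Or.inr (Or.inl hB)))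
      · exact com4' ((memC4 y).mpr (Or.inl hA)) ((memC4 z).mpr (Or.inr (Or.inr hB)))
      · exact com1' ((memC1 y).mpr (Or.inr (Or.inr hA))) ((memC1 z).mpr (Or.inr (Or.inr hB)))
      · by_cases k1 : y ∈ H.Q1.support
        · exact com3' ((memC3 y).mpr (Or.inl k1)) ((memC3 z).mpr (Or.inr (Or.inr hB)))
        by_cases k2 : y ∈ H.Q2.support
        · exact com2' ((memC2 y).mpr (Or.inr (Or.inr k2))) ((memC2 z).mpr (Or.inr (Or.inl hB)))
        by_cases k3 : z ∈ H.Q1.support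
        · exact com1' ((memC1 y).mpr (Or.inr (Or.inr hA))) ((memC1 z).mpr (Or.inr (Or.inl k3)))
        by_cases k4 : z ∈ H.Q2.support
        · exact com4' ((memC4 y).mpr (Or.inl hA)) ((memC4 z).mpr (Or.inr (Or.inr k4)))
        exact oppL y hA z hB k1 k2 k3 k4 (Walk.cons hxz.symm (Walk.cons hxy Walk.nil)) (hTpath hxz.symm hxy (Ne.symm hne) hz hy) (Or.inr ⟨rfl, hl3⟩) edgeTs3
    · rcases hz' with hB | hB | hB | hB | hB | hB
      · exact com2' ((memC2 y).mpr (Or.inr (Or.inl hA))) ((memC2 z).mpr (Or.inl hB))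
      · exact com3' ((memC3 y).mpr (Or.inr (Or.inr hA))) ((memC3 z).mpr (Or.inr (Or.inl hB)))
      · exact com3' ((memC3 y).mpr (Or.inr (Or.inr hA))) ((memC3 z).mpr (Or.inl hB))
      · exact com2' ((memC2 y).mpr (Or.inr (Or.inl hA))) ((memC2 z).mpr (Or.inr (Or.inr hB)))
      · by_cases k1 : z ∈ H.Q1.support
        · exact com3' ((memC3 y).mpr (Or.inr (Or.inr hA))) ((memC3 z).mpr (Or.inl k1))
        by_cases k2 : z ∈ H.Q2.support
        · exact com2' ((memC2 y).mpr (Or.inr (Or.inl hA))) ((memC2 z).mpr (Or.inr (Or.inr k2)))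
        by_cases k3 : y ∈ H.Q1.support
        · exact com1' ((memC1 y).mpr (Or.inr (Or.inl k3))) ((memC1 z).mpr (Or.inr (Or.inr hB)))
        by_cases k4 : y ∈ H.Q2.support
        · exact com4' ((memC4 y).mpr (Or.inr (Or.inr k4))) ((memC4 z).mpr (Or.inl hB))
        exact oppL z hB y hA k1 k2 k3 k4 (Walk.cons hxy.symm (Walk.cons hxz Walk.nil)) (hTpath hxy.symm hxz hne hy hz) (Or.inr ⟨rfl, hl3⟩) edgeTs3
      · exact com2' ((memC2 y).mpr (Or.inr (Or.inl hA))) ((memC2 z).mpr (Or.inr (Or.inl hB)))
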